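/- arXiv:2402.08818 — 2 statements merged into one kernel-verified Lean document; each statement's English description precedes it below -/
import Mathlib

section
/- Let E : ℝⁿ → ℝ be twice continuously differentiable with gradient g, and let U ⊆ ℝⁿ be an open corridor for E. If θ ∈ U and the segment {θ - s • g(θ) : s ∈ [0, t]} lies in U, then the loss decreases linearly along the line of steepest descent: E(θ - t • g(θ)) = E(θ) - t‖g(θ)‖². -/
/-- An open set `U ⊆ ℝⁿ` is a *corridor* for `E` if every solution of the gradient flow
`θ'(t) = -∇E(θ(t))` whose image lies in `U` is a straight line traveled at constant speed,
i.e. satisfies `θ(t) = θ(a) + (t - a) • v` for some fixed vector `v`. -/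
def IsCorridor {n : ℕ} (E : EuclideanSpace ℝ (Fin n) → ℝ)
    (U : Set (EuclideanSpace ℝ (Fin n))) : Prop :=
  ∀ (a b : ℝ), a ≤ b → ∀ θ : ℝ → EuclideanSpace ℝ (Fin n),
    (∀ t ∈ Set.Icc a b, HasDerivAt θ (-(gradient E (θ t))) t) →
    (∀ t ∈ Set.Icc a b, θ t ∈ U) →
    ∃ v : EuclideanSpace ℝ (Fin n), ∀ t ∈ Set.Icc a b, θ t = θ a + (t - a) • v

open Set

lemma gradient_contDiff' {n : ℕ} {E : EuclideanSpace ℝ (Fin n) → ℝ} (hE : ContDiff ℝ 2 E) :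
    ContDiff ℝ 1 (fun x => gradient E x) := by
  have h1 : ContDiff ℝ 1 (fderiv ℝ E) := hE.fderiv_right (by norm_num)
  exact (InnerProductSpace.toDual ℝ (EuclideanSpace ℝ (Fin n))).symm.contDiff.comp h1

lemma key_local {n : ℕ} {E : EuclideanSpace ℝ (Fin n) → ℝ} (hE : ContDiff ℝ 2 E)
    {U : Set (EuclideanSpace ℝ (Fin n))} (hU : IsOpen U) (hcor : IsCorridor E U)
    {x₀ : EuclideanSpace ℝ (Fin n)} (hx₀ : x₀ ∈ U) :
    ∃ ε > (0:ℝ), ∀ s : ℝ, |s| ≤ ε →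
      gradient E (x₀ - s • gradient E x₀) = gradient E x₀ := by
  have hg1 : ContDiff ℝ 1 (fun x => -(gradient E x)) := (gradient_contDiff' hE).neg
  obtain ⟨f, hf0, ε₁, hε₁, hf⟩ :=
    ContDiffAt.exists_forall_mem_closedBall_exists_eq_forall_mem_Ioo_hasDerivAt₀
      (f := fun x => -(gradient E x)) (x₀ := x₀) hg1.contDiffAt (0:ℝ)
  have hc : ContinuousAt f 0 := (hf 0 ⟨by linarith, by linarith⟩).continuousAt
  have hUnhds : U ∈ nhds (f 0) := hU.mem_nhds (hf0 ▸ hx₀)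
  obtain ⟨δ, hδ0, hball⟩ := Metric.mem_nhds_iff.mp (hc.preimage_mem_nhds hUnhds)
  set ε₂ := min ε₁ δ / 2 with hε₂def
  have hε₂ : 0 < ε₂ := by positivity
  have hε₂ε₁ : ε₂ < ε₁ := by
    have : min ε₁ δ ≤ ε₁ := min_le_left _ _
    simp only [hε₂def]; linarith
  have hε₂δ : ε₂ < δ := by
    have : min ε₁ δ ≤ δ := min_le_right _ _
    simp only [hε₂def]; linarith
  have hderivIcc : ∀ u ∈ Icc (-ε₂) ε₂, HasDerivAt f (-(gradient E (f u))) u := by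
    intro u hu
    exact hf u ⟨by simp only [zero_sub]; linarith [hu.1], by simp only [zero_add]; linarith [hu.2]⟩
  have hmemIcc : ∀ u ∈ Icc (-ε₂) ε₂, f u ∈ U := by
    intro u hu
    apply hball
    simp only [Metric.mem_ball, Real.dist_eq, sub_zero]
    exact lt_of_le_of_lt (abs_le.mpr ⟨hu.1, hu.2⟩) hε₂δ
  obtain ⟨v, hv⟩ := hcor (-ε₂) ε₂ (by linarith) f hderivIcc hmemIcc
  have haff : ∀ u ∈ Ioo (-ε₂) ε₂, HasDerivAt f v u := by
    intro u hu
    have h1 : HasDerivAt (fun u : ℝ => f (-ε₂) + (u - (-ε₂)) • v) v u := by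
      simpa using (((hasDerivAt_id u).sub_const (-ε₂)).smul_const v).const_add (f (-ε₂))
    apply h1.congr_of_eventuallyEq
    filter_upwards [Icc_mem_nhds hu.1 hu.2] with y hy
    exact hv y hy
  have hvu : ∀ u ∈ Ioo (-ε₂) ε₂, -(gradient E (f u)) = v := fun u hu =>
    (hderivIcc u (Ioo_subset_Icc_self hu)).unique (haff u hu)
  have h0mem : (0:ℝ) ∈ Ioo (-ε₂) ε₂ := ⟨by linarith, hε₂⟩
  have hv0 : v = -(gradient E x₀) := by rw [← hvu 0 h0mem, hf0]
  have hfm : f (-ε₂) = x₀ - (0 - -ε₂) • v := by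
    have h0 := hv 0 (Ioo_subset_Icc_self h0mem)
    rw [hf0] at h0
    rw [eq_sub_iff_add_eq, ← h0]
  have hfu : ∀ u ∈ Icc (-ε₂) ε₂, f u = x₀ + u • v := by
    intro u hu
    rw [hv u hu, hfm]
    module
  refine ⟨ε₂ / 2, by positivity, fun s hs => ?_⟩
  have hsm : s ∈ Ioo (-ε₂) ε₂ := by
    rw [abs_le] at hs
    constructor <;> [linarith [hs.1]; linarith [hs.2]]
  have hfs : x₀ - s • gradient E x₀ = f s := by
    rw [hfu s (Ioo_subset_Icc_self hsm), hv0]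
    module
  rw [hfs]
  have := hvu s hsm
  rw [hv0] at this
  exact neg_injective this

/-- Let `U` be an open corridor for a twice continuously differentiable
loss `E` with gradient `g`. If `θ ∈ U` and the segment `{θ - s • g(θ) : s ∈ [0, t]}` lies in
`U`, then the loss decreases linearly along the line of steepest descent:
`E(θ - t • g(θ)) = E(θ) - t‖g(θ)‖²`. -/
theorem loss_linear_on_steepest_descent_line {n : ℕ}
    (E : EuclideanSpace ℝ (Fin n) → ℝ) (hE : ContDiff ℝ 2 E)
    (U : Set (EuclideanSpace ℝ (Fin n))) (hU : IsOpen U) (hcor : IsCorridor E U)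
    (θ : EuclideanSpace ℝ (Fin n)) (hθ : θ ∈ U)
    (t : ℝ) (ht : 0 ≤ t)
    (hseg : ∀ s ∈ Set.Icc (0 : ℝ) t, θ - s • gradient E θ ∈ U) :
    E (θ - t • gradient E θ) = E θ - t * ‖gradient E θ‖ ^ 2 := by
  set g := gradient E θ with hg
  set S : Set ℝ := {s : ℝ | gradient E (θ - s • g) = g} with hSdef
  have hgcont : Continuous (fun x => gradient E x) := (gradient_contDiff' hE).continuous
  have hScl : IsClosed (S ∩ Icc 0 t) := by
    apply IsClosed.inter _ isClosed_Icc
    exact isClosed_eq (hgcont.comp (continuous_const.sub (continuous_id.smul continuous_const))) continuous_const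
  have h0S : (0:ℝ) ∈ S := by simp [hSdef, hg]
  have hsub : Icc 0 t ⊆ S := by
    apply hScl.Icc_subset_of_forall_exists_gt h0S
    rintro x ⟨hxS, hx0, hxt⟩ y hy
    have hxU : θ - x • g ∈ U := hseg x ⟨hx0, le_of_lt hxt⟩
    obtain ⟨ε, hε, hkey⟩ := key_local hE hU hcor hxU
    set d := min ε (min (y - x) (t - x)) with hd
    have hd0 : 0 < d := by
      apply lt_min hε
      exact lt_min (by simpa using hy) (by linarith)
    refine ⟨x + d / 2, ?_, by linarith, ?_⟩
    · show gradient E (θ - (x + d / 2) • g) = g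
      have heq : θ - (x + d / 2) • g = (θ - x • g) - (d / 2) • gradient E (θ - x • g) := by
        rw [hxS]; module
      rw [heq, hkey (d/2) (by
        rw [abs_of_nonneg (by linarith)]
        have := min_le_left ε (min (y - x) (t - x)); linarith), hxS]
    · have h1 : d ≤ y - x := le_trans (min_le_right _ _) (min_le_left _ _)
      linarith
  -- integration step
  have hdiff : Differentiable ℝ E := hE.differentiable two_ne_zero
  have hφderiv : ∀ s ∈ Icc (0:ℝ) t,
      HasDerivAt (fun s : ℝ => E (θ - s • g) + s * ‖g‖ ^ 2) 0 s := by
    intro s hs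
    have hp : HasDerivAt (fun s : ℝ => θ - s • g) (-g) s := by
      simpa using ((hasDerivAt_id s).smul_const g).const_sub θ
    have hgrad : HasGradientAt E g (θ - s • g) := by
      have := (hdiff (θ - s • g)).hasGradientAt
      rwa [hsub hs] at this
    have hEc : HasDerivAt (fun s : ℝ => E (θ - s • g))
        ((InnerProductSpace.toDual ℝ _ g) (-g)) s :=
      hgrad.hasFDerivAt.comp_hasDerivAt s hp
    have hval : (InnerProductSpace.toDual ℝ _ g) (-g) = -‖g‖ ^ 2 := by
      rw [InnerProductSpace.toDual_apply_apply, inner_neg_right, real_inner_self_eq_norm_sq]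
    rw [hval] at hEc
    have h2 : HasDerivAt (fun s : ℝ => s * ‖g‖ ^ 2) (‖g‖ ^ 2) s := by
      simpa using (hasDerivAt_id s).mul_const (‖g‖ ^ 2)
    have h3 := hEc.add h2
    rw [neg_add_cancel] at h3
    exact h3
  have hcont : ContinuousOn (fun s : ℝ => E (θ - s • g) + s * ‖g‖ ^ 2) (Icc 0 t) := by
    apply Continuous.continuousOn
    exact (hE.continuous.comp (continuous_const.sub (continuous_id.smul continuous_const))).add (continuous_id.mul continuous_const)
  have := constant_of_has_deriv_right_zero hcont
    (fun x hx => (hφderiv x ⟨hx.1, le_of_lt hx.2⟩).hasDerivWithinAt)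
    t (right_mem_Icc.mpr ht)
  simp only [zero_smul, sub_zero, zero_mul, add_zero] at this
  linarith
end

section
/- Let E : ℝⁿ → ℝ be twice continuously differentiable with gradient g, let U ⊆ ℝⁿ be an open corridor for E, and let θ ∈ U with g(θ) ≠ 0. Set h = E(θ)/‖g(θ)‖² (the corridor learning rate) and assume h ≥ 0 and that the segment {θ - s • g(θ) : s ∈ [0, h]} lies in U. Then a single gradient descent step with this learning rate reaches zero loss: E(θ - h • g(θ)) = 0. -/
open Set InnerProductSpace

theorem gradient_contDiff_one {n : ℕ} (E : EuclideanSpace ℝ (Fin n) → ℝ)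
    (hE : ContDiff ℝ 2 E) : ContDiff ℝ 1 (gradient E) := by
  rw [show (2 : WithTop ℕ∞) = 1 + 1 from rfl] at hE
  obtain ⟨-, -, hfd⟩ := contDiff_succ_iff_fderiv.mp hE
  have : gradient E = fun x => (toDual ℝ (EuclideanSpace ℝ (Fin n))).symm (fderiv ℝ E x) := rfl
  rw [this]
  exact (toDual ℝ (EuclideanSpace ℝ (Fin n))).symm.contDiff.comp hfd

/-- **Corridor learning rate.** Let `U` be an open corridor for a twice
continuously differentiable loss `E` with gradient `g`, and let `θ ∈ U` with `g(θ) ≠ 0`.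
Set `h = E(θ)/‖g(θ)‖²` (the corridor learning rate) and assume `h ≥ 0` and that the segment
`{θ - s • g(θ) : s ∈ [0, h]}` lies in `U`. Then a single gradient descent step with this
learning rate reaches zero loss: `E(θ - h • g(θ)) = 0`. -/
theorem corridor_learning_rate_reaches_zero_loss {n : ℕ}
    (E : EuclideanSpace ℝ (Fin n) → ℝ) (hE : ContDiff ℝ 2 E)
    (U : Set (EuclideanSpace ℝ (Fin n))) (hU : IsOpen U) (hcor : IsCorridor E U)
    (θ : EuclideanSpace ℝ (Fin n)) (hθ : θ ∈ U) (hg : gradient E θ ≠ 0)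
    (h : ℝ) (hdef : h = E θ / ‖gradient E θ‖ ^ 2) (hpos : 0 ≤ h)
    (hseg : ∀ s ∈ Set.Icc (0 : ℝ) h, θ - s • gradient E θ ∈ U) :
    E (θ - h • gradient E θ) = 0 := by
  set v : EuclideanSpace ℝ (Fin n) := gradient E θ with hv
  have hgC1 : ContDiff ℝ 1 (gradient E) := gradient_contDiff_one E hE
  have hgcont : Continuous (gradient E) := hgC1.continuous
  have hwC1 : ContDiff ℝ 1 (fun x => -(gradient E x)) := hgC1.neg
  -- Key claim: near any point of the segment where the gradient equals `v`, it equals `v`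
  -- on a whole relative neighborhood.
  have claim : ∀ t ∈ Icc (0 : ℝ) h, gradient E (θ - t • v) = v →
      ∃ ε > (0 : ℝ), ∀ s, |s - t| < ε → gradient E (θ - s • v) = v := by
    intro t ht hgt
    set p : EuclideanSpace ℝ (Fin n) := θ - t • v with hp
    have hpU : p ∈ U := hseg t ht
    obtain ⟨f, hft, ε₀, hε₀, hode⟩ :=
      (hwC1.contDiffAt (x := p)).exists_forall_mem_closedBall_exists_eq_forall_mem_Ioo_hasDerivAt₀ t
    have hfc : ContinuousAt f t :=
      (hode t ⟨by linarith, by linarith⟩).continuousAt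
    have hfU : f ⁻¹' U ∈ nhds t := hfc.preimage_mem_nhds (hU.mem_nhds (hft ▸ hpU))
    obtain ⟨ε₁, hε₁, hball⟩ := Metric.mem_nhds_iff.mp hfU
    set ε : ℝ := min ε₀ ε₁ / 2 with hε
    have hεpos : 0 < ε := by positivity
    have hεlt₀ : ε < ε₀ := by
      have := min_le_left ε₀ ε₁; simp only [hε]; linarith
    have hεlt₁ : ε < ε₁ := by
      have := min_le_right ε₀ ε₁; simp only [hε]; linarith
    have hsubIoo : Icc (t - ε) (t + ε) ⊆ Ioo (t - ε₀) (t + ε₀) := fun s hs =>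
      ⟨by linarith [hs.1], by linarith [hs.2]⟩
    have hder : ∀ s ∈ Icc (t - ε) (t + ε), HasDerivAt f (-(gradient E (f s))) s :=
      fun s hs => hode s (hsubIoo hs)
    have himg : ∀ s ∈ Icc (t - ε) (t + ε), f s ∈ U := by
      intro s hs
      apply hball
      rw [Metric.mem_ball, Real.dist_eq]
      exact lt_of_le_of_lt (abs_sub_le_iff.mpr ⟨by linarith [hs.2], by linarith [hs.1]⟩) hεlt₁
    obtain ⟨w, hw⟩ := hcor (t - ε) (t + ε) (by linarith) f hder himg
    -- On the open interval, `f` is locally the affine map, so its derivative is `w`.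
    have hderw : ∀ s ∈ Ioo (t - ε) (t + ε), HasDerivAt f w s := by
      intro s hs
      have haff : HasDerivAt (fun u : ℝ => f (t - ε) + (u - (t - ε)) • w) w s := by
        have h1 : HasDerivAt (fun u : ℝ => (u - (t - ε)) • w) ((1 : ℝ) • w) s :=
          ((hasDerivAt_id s).sub_const (t - ε)).smul_const w
        simpa using h1.const_add (f (t - ε))
      refine haff.congr_of_eventuallyEq ?_
      filter_upwards [Icc_mem_nhds hs.1 hs.2] with u hu
      exact hw u hu
    have htmem : t ∈ Ioo (t - ε) (t + ε) := ⟨by linarith, by linarith⟩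
    -- At `t`, the ODE derivative is `-v`, so `w = -v`.
    have hwv : w = -v := by
      have h0 := (hderw t htmem).unique (hder t (Ioo_subset_Icc_self htmem))
      rw [hft, hgt] at h0
      exact h0
    -- For `s` in the open interval, `f s = θ - s • v` and the gradient there is `v`.
    refine ⟨ε, hεpos, fun s hs => ?_⟩
    have hsmem : s ∈ Ioo (t - ε) (t + ε) := by
      rcases abs_sub_lt_iff.mp hs with ⟨h1, h2⟩
      exact ⟨by linarith, by linarith⟩
    have hfs : f s = θ - s • v := by
      have h1 := hw s (Ioo_subset_Icc_self hsmem)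
      have h2 := hw t (Ioo_subset_Icc_self htmem)
      have h3 : f s = f t + (s - t) • w := by
        rw [h1, h2]; module
      rw [h3, hft, hp, hwv]
      rw [smul_neg, sub_smul]
      abel
    have := (hderw s hsmem).unique (hder s (Ioo_subset_Icc_self hsmem))
    rw [hwv] at this
    have hgs : gradient E (f s) = v := by
      have h4 := congrArg Neg.neg this
      simpa using h4.symm
    rw [← hfs, hgs]
  -- The set where the gradient equals `v` is relatively clopen in `[0, h]`, hence everything.
  have key : ∀ s ∈ Icc (0 : ℝ) h, gradient E (θ - s • v) = v := by
    haveI : PreconnectedSpace (Icc (0 : ℝ) h) := Subtype.preconnectedSpace isPreconnected_Icc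
    set A : Set (Icc (0 : ℝ) h) := {s | gradient E (θ - (s : ℝ) • v) = v} with hA
    have hclosed : IsClosed A := by
      apply isClosed_eq _ continuous_const
      exact hgcont.comp ((continuous_const.sub ((continuous_subtype_val).smul continuous_const)))
    have hopen : IsOpen A := by
      rw [isOpen_iff_mem_nhds]
      rintro ⟨t, htIcc⟩ htA
      obtain ⟨ε, hεpos, hball⟩ := claim t htIcc htA
      rw [nhds_subtype_eq_comap, Filter.mem_comap]
      refine ⟨Metric.ball t ε, Metric.ball_mem_nhds t hεpos, ?_⟩
      rintro ⟨s, hsIcc⟩ hsb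
      exact hball s (by simpa [Real.dist_eq] using hsb)
    have hne : A.Nonempty := by
      refine ⟨⟨0, left_mem_Icc.mpr hpos⟩, ?_⟩
      simp [hA, hv]
    have := IsClopen.eq_univ ⟨hclosed, hopen⟩ hne
    intro s hs
    have : (⟨s, hs⟩ : Icc (0 : ℝ) h) ∈ A := this ▸ mem_univ _
    exact this
  -- Along the segment, `E` decreases at constant rate `‖v‖²`.
  have hEdiff : Differentiable ℝ E := hE.differentiable (by norm_num)
  set φ : ℝ → ℝ := fun s => E (θ - s • v) + s * ‖v‖ ^ 2 with hφ
  have hφder : ∀ s ∈ Icc (0 : ℝ) h, HasDerivAt φ 0 s := by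
    intro s hs
    have hc : HasDerivAt (fun u : ℝ => θ - u • v) (-v) s := by
      have h1 : HasDerivAt (fun u : ℝ => u • v) ((1 : ℝ) • v) s := (hasDerivAt_id s).smul_const v
      simpa using (h1.const_sub θ)
    have hgr : HasGradientAt E (gradient E (θ - s • v)) (θ - s • v) :=
      (hEdiff (θ - s • v)).hasGradientAt
    have hced : HasDerivAt (fun u : ℝ => E (θ - u • v))
        ((toDual ℝ (EuclideanSpace ℝ (Fin n))) (gradient E (θ - s • v)) (-v)) s :=
      hgr.hasFDerivAt.comp_hasDerivAt s hc
    have hval : (toDual ℝ (EuclideanSpace ℝ (Fin n))) (gradient E (θ - s • v)) (-v)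
        = -‖v‖ ^ 2 := by
      rw [key s hs, toDual_apply_apply, inner_neg_right, real_inner_self_eq_norm_sq]
    rw [hval] at hced
    have hlin : HasDerivAt (fun u : ℝ => u * ‖v‖ ^ 2) (‖v‖ ^ 2) s := by
      simpa using (hasDerivAt_id s).mul_const (‖v‖ ^ 2)
    have := hced.add hlin
    simp only [neg_add_cancel] at this
    exact this
  have hφcont : ContinuousOn φ (Icc 0 h) := fun s hs =>
    (hφder s hs).continuousAt.continuousWithinAt
  have hφconst : φ h = φ 0 :=
    constant_of_has_deriv_right_zero hφcont
      (fun s hs => ((hφder s (Ico_subset_Icc_self hs)).hasDerivWithinAt)) h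
      (right_mem_Icc.mpr hpos)
  have hnorm : ‖v‖ ^ 2 ≠ 0 := by
    simpa using (norm_ne_zero_iff.mpr hg)
  have : E (θ - h • v) + h * ‖v‖ ^ 2 = E θ := by
    simpa [hφ] using hφconst
  rw [hdef] at this ⊢
  field_simp at this ⊢
  linarith
end
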